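/- A commutative ring A is clean if and only if for any two distinct maximal ideals 𝔪, 𝔪′ of A there exists an idempotent e ∈ A with e ∈ 𝔪 and 1 − e ∈ 𝔪′. -/

import Mathlib

private lemma prod_idem {A : Type*} [CommRing A] (t : Finset A) (g : A → A)
    (h : ∀ x ∈ t, IsIdempotentElem (g x)) : IsIdempotentElem (∏ x ∈ t, g x) := by
  unfold IsIdempotentElem
  rw [← Finset.prod_mul_distrib]
  exact Finset.prod_congr rfl h

private lemma one_sub_prod_mem {A : Type*} [CommRing A] (t : Finset A) :
    1 - ∏ x ∈ t, (1 - x) ∈ Ideal.span (t : Set A) := by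
  classical
  induction t using Finset.induction with
  | empty => simp
  | @insert x s hx ih =>
    rw [Finset.prod_insert hx]
    have h1 : (1:A) - (1-x) * ∏ y ∈ s, (1-y) =
        (1 - ∏ y ∈ s, (1-y)) + x * ∏ y ∈ s, (1-y) := by ring
    rw [h1, Finset.coe_insert]
    refine Submodule.add_mem _ ?_ ?_
    · exact Ideal.span_mono (Set.subset_insert _ _) ih
    · exact Ideal.mul_mem_right _ _ (Ideal.subset_span (Set.mem_insert _ _))

private lemma mul_span_zero {A : Type*} [CommRing A] {t : Finset A} {f z : A}
    (hz : z ∈ Ideal.span (t : Set A)) (h : ∀ y ∈ t, f * y = 0) : f * z = 0 := by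
  refine Submodule.span_induction (p := fun z _ => f * z = 0) ?_ ?_ ?_ ?_ hz
  · intro x hx; exact h x hx
  · simp
  · intro x y _ _ hx hy; rw [mul_add, hx, hy, add_zero]
  · intro c x _ hx
    rw [smul_eq_mul, show f * (c * x) = c * (f * x) by ring, hx, mul_zero]

private lemma idem_mem_or {A : Type*} [CommRing A] {m : Ideal A} (hm : m.IsPrime)
    {e : A} (he : IsIdempotentElem e) : e ∈ m ∨ 1 - e ∈ m := by
  have h0 : e * (1 - e) = 0 := by
    rw [mul_sub, mul_one, he.eq, sub_self]
  exact hm.mem_or_mem (h0 ▸ m.zero_mem)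

/-- Key step: given the separation hypothesis and a maximal ideal p containing a,
there is an idempotent f with 1 - f ∈ p and f ∈ (a-1). -/
private lemma step1 {A : Type*} [CommRing A]
    (hsep : ∀ m m' : Ideal A, m.IsMaximal → m'.IsMaximal → m ≠ m' →
        ∃ e : A, IsIdempotentElem e ∧ e ∈ m ∧ 1 - e ∈ m')
    (a : A) {p : Ideal A} (hp : p.IsMaximal) (hap : a ∈ p) :
    ∃ f : A, IsIdempotentElem f ∧ 1 - f ∈ p ∧ f ∈ Ideal.span {a - 1} := by
  classical
  set S : Set A := {x | IsIdempotentElem (1 - x) ∧ x ∈ p} with hS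
  have hK : Ideal.span (insert (a-1) S) = ⊤ := by
    by_contra hK
    obtain ⟨m, hm, hle⟩ := Ideal.exists_le_maximal _ hK
    have ham : a - 1 ∈ m := hle (Ideal.subset_span (Set.mem_insert _ _))
    have hne : m ≠ p := by
      rintro rfl
      have : (1:A) ∈ m := by
        have := m.sub_mem hap ham; simpa using this
      exact hm.ne_top ((Ideal.eq_top_iff_one m).mpr this)
    obtain ⟨e, he, hem, hep⟩ := hsep m p hm hp hne
    have h1e : (1 : A) - e ∈ m := by
      refine hle (Ideal.subset_span (Set.mem_insert_of_mem _ ?_))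
      exact ⟨by simpa using he, hep⟩
    have : (1:A) ∈ m := by simpa using m.add_mem hem h1e
    exact hm.ne_top ((Ideal.eq_top_iff_one m).mpr this)
  have h1 : (1:A) ∈ Ideal.span (insert (a-1) S) := hK ▸ Submodule.mem_top
  obtain ⟨T, hTsub, hT⟩ := Submodule.mem_span_finite_of_mem_span h1
  set T' : Finset A := T.erase (a-1) with hT'
  have hT'S : ∀ x ∈ T', IsIdempotentElem (1 - x) ∧ x ∈ p := by
    intro x hx
    rcases hTsub (Finset.mem_of_mem_erase hx) with h | h
    · exact absurd h (Finset.ne_of_mem_erase hx)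
    · exact h
  refine ⟨∏ x ∈ T', (1 - x), prod_idem _ _ (fun x hx => (hT'S x hx).1), ?_, ?_⟩
  · -- 1 - f ∈ span T' ≤ p
    have h2 : Ideal.span (T' : Set A) ≤ p := by
      rw [Ideal.span_le]; intro x hx; exact (hT'S x hx).2
    exact h2 (one_sub_prod_mem T')
  · -- f ∈ span {a-1}
    have hTins : (T : Set A) ⊆ insert (a-1) (T' : Set A) := by
      intro x hx
      by_cases hxa : x = a - 1
      · exact hxa ▸ Set.mem_insert _ _
      · exact Set.mem_insert_of_mem _ (Finset.mem_erase.mpr ⟨hxa, hx⟩)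
    have h1' : (1:A) ∈ Ideal.span (insert (a-1) (T' : Set A)) :=
      Ideal.span_mono hTins hT
    obtain ⟨c, z, hz, hcz⟩ := Ideal.mem_span_insert.mp h1'
    set f : A := ∏ x ∈ T', (1 - x)
    have hfz : f * z = 0 := by
      refine mul_span_zero hz ?_
      intro y hy
      have hy' : f = (1 - y) * ∏ x ∈ T'.erase y, (1 - x) :=
        (Finset.mul_prod_erase T' (fun x => 1 - x) hy).symm
      have h0 : (1 - y) * y = 0 := by
        linear_combination (-1 : A) * (hT'S y hy).1.eq
      rw [hy', mul_comm (1-y), mul_assoc, h0, mul_zero]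
    have hthis : f = f * (c * (a - 1)) := by
      have h4 := congrArg (f * ·) hcz
      rw [mul_one, mul_add, hfz, add_zero] at h4
      exact h4
    have h5 : f * (c * (a - 1)) ∈ Ideal.span {a - 1} :=
      Ideal.mul_mem_left _ _ (Ideal.mul_mem_left _ _ (Ideal.subset_span rfl))
    rwa [← hthis] at h5

theorem clean_iff_idempotent_separating_maximals (A : Type*) [CommRing A] :
    (∀ a : A, ∃ e u : A, IsIdempotentElem e ∧ IsUnit u ∧ a = e + u) ↔
      ∀ m m' : Ideal A, m.IsMaximal → m'.IsMaximal → m ≠ m' →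
        ∃ e : A, IsIdempotentElem e ∧ e ∈ m ∧ 1 - e ∈ m' := by
  classical
  constructor
  · -- clean ⇒ separation
    intro hclean m m' hm hm' hne
    have hcop : m ⊔ m' = ⊤ := Ideal.IsMaximal.coprime_of_ne hm hm' hne
    have h1 : (1:A) ∈ m ⊔ m' := hcop ▸ Submodule.mem_top
    obtain ⟨x, hx, y, hy, hxy⟩ := Submodule.mem_sup.mp h1
    obtain ⟨e, u, he, hu, hxe⟩ := hclean x
    rcases idem_mem_or hm.isPrime he with hem | hem
    · rcases idem_mem_or hm'.isPrime he with hem' | hem'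
      · exfalso
        have hum : u ∈ m := by
          have h2 : u = x - e := by rw [hxe]; ring
          rw [h2]; exact m.sub_mem hx hem
        exact hm.ne_top (Ideal.eq_top_of_isUnit_mem m hum hu)
      · exact ⟨e, he, hem, hem'⟩
    · rcases idem_mem_or hm'.isPrime he with hem' | hem'
      · exact ⟨1 - e, he.one_sub, hem, by simpa using hem'⟩
      · exfalso
        have hum : u ∈ m' := by
          have h2 : u = (x - 1) + (1 - e) := by rw [hxe]; ring
          have h3 : x - 1 ∈ m' := by
            have : x - 1 = -y := by rw [← hxy]; ring
            rw [this]; exact m'.neg_mem hy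
          rw [h2]; exact m'.add_mem h3 hem'
        exact hm'.ne_top (Ideal.eq_top_of_isUnit_mem m' hum hu)
  · -- separation ⇒ clean
    intro hsep a
    -- Step 2: global idempotent
    set S₂ : Set A := {f | IsIdempotentElem f ∧ f ∈ Ideal.span {a - 1}} with hS₂
    have hK : Ideal.span (insert a S₂) = ⊤ := by
      by_contra hK
      obtain ⟨p, hp, hle⟩ := Ideal.exists_le_maximal _ hK
      have hap : a ∈ p := hle (Ideal.subset_span (Set.mem_insert _ _))
      obtain ⟨f, hf, hfp, hfa⟩ := step1 hsep a hp hap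
      have : f ∈ p := hle (Ideal.subset_span (Set.mem_insert_of_mem _ ⟨hf, hfa⟩))
      have h1 : (1:A) ∈ p := by simpa using p.add_mem this hfp
      exact hp.ne_top ((Ideal.eq_top_iff_one p).mpr h1)
    have h1 : (1:A) ∈ Ideal.span (insert a S₂) := hK ▸ Submodule.mem_top
    obtain ⟨T, hTsub, hT⟩ := Submodule.mem_span_finite_of_mem_span h1
    set T' : Finset A := T.erase a with hT'
    have hT'S : ∀ x ∈ T', IsIdempotentElem x ∧ x ∈ Ideal.span {a - 1} := by
      intro x hx
      rcases hTsub (Finset.mem_of_mem_erase hx) with h | h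
      · exact absurd h (Finset.ne_of_mem_erase hx)
      · exact h
    set g : A := ∏ x ∈ T', (1 - x) with hg
    have hgid : IsIdempotentElem g :=
      prod_idem _ _ (fun x hx => (hT'S x hx).1.one_sub)
    have hga : g ∈ Ideal.span {a} := by
      have hTins : (T : Set A) ⊆ insert a (T' : Set A) := by
        intro x hx
        by_cases hxa : x = a
        · exact hxa ▸ Set.mem_insert _ _
        · exact Set.mem_insert_of_mem _ (Finset.mem_erase.mpr ⟨hxa, hx⟩)
      have h1' : (1:A) ∈ Ideal.span (insert a (T' : Set A)) := Ideal.span_mono hTins hT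
      obtain ⟨c, z, hz, hcz⟩ := Ideal.mem_span_insert.mp h1'
      have hgz : g * z = 0 := by
        refine mul_span_zero hz ?_
        intro y hy
        have hy' : g = (1 - y) * ∏ x ∈ T'.erase y, (1 - x) :=
          (Finset.mul_prod_erase T' (fun x => 1 - x) hy).symm
        have h0 : (1 - y) * y = 0 := by
          linear_combination (-1 : A) * (hT'S y hy).1.eq
        rw [hy', mul_comm (1-y), mul_assoc, h0, mul_zero]
      have hthis : g = g * (c * a) := by
        have h4 := congrArg (g * ·) hcz
        rw [mul_one, mul_add, hgz, add_zero] at h4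
        exact h4
      have h5 : g * (c * a) ∈ Ideal.span {a} :=
        Ideal.mul_mem_left _ _ (Ideal.mul_mem_left _ _ (Ideal.subset_span rfl))
      rwa [← hthis] at h5
    -- e := 1 - g
    set e : A := 1 - g with he
    have heid : IsIdempotentElem e := hgid.one_sub
    have hem : ∀ m : Ideal A, m.IsMaximal → a - 1 ∈ m → e ∈ m := by
      intro m hm ha1
      have hspan : Ideal.span (T' : Set A) ≤ m := by
        rw [Ideal.span_le]
        intro x hx
        have := (hT'S x hx).2
        have hmem : Ideal.span ({a-1} : Set A) ≤ m := by
          rw [Ideal.span_le]; simpa using ha1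
        exact hmem this
      exact hspan (by simpa [he, hg] using one_sub_prod_mem T')
    -- u := a - e is a unit
    have hunit : IsUnit (a - e) := by
      rw [← Ideal.span_singleton_eq_top]
      by_contra htop
      obtain ⟨m, hm, hle⟩ := Ideal.exists_le_maximal _ htop
      have hae : a - e ∈ m := hle (Ideal.subset_span rfl)
      by_cases ham : a ∈ m
      · -- g ∈ (a) ≤ m, so 1 - e ∈ m, e ≡ 1
        have hgm : g ∈ m := by
          have : Ideal.span ({a} : Set A) ≤ m := by
            rw [Ideal.span_le]; simpa using ham
          exact this hga
        have h1 : (1:A) ∈ m := by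
          have : (1:A) = g - (a - e) + a := by rw [he]; ring
          rw [this]
          exact m.add_mem (m.sub_mem hgm hae) ham
        exact hm.ne_top ((Ideal.eq_top_iff_one m).mpr h1)
      · by_cases ha1 : a - 1 ∈ m
        · have hemm : e ∈ m := hem m hm ha1
          have h1 : (1:A) ∈ m := by
            have : (1:A) = (a - e) + e - (a - 1) := by ring
            rw [this]
            exact m.sub_mem (m.add_mem hae hemm) ha1
          exact hm.ne_top ((Ideal.eq_top_iff_one m).mpr h1)
        · rcases idem_mem_or hm.isPrime heid with hemm | hemm
          · exact ham (by simpa using m.add_mem hae hemm)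
          · refine ha1 ?_
            have : a - 1 = (a - e) - (1 - e) := by ring
            rw [this]
            exact m.sub_mem hae hemm
    exact ⟨e, a - e, heid, hunit, by ring⟩
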